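/- Kloosterman completion identity: let q₀ be a prime, q₁ an integer coprime to q₀, K₀ : ℤ → ℂ a q₀-periodic function, r an integer, and n an integer not divisible by q₀. Let q̄₁ be an integer with q̄₁ q₁ ≡ 1 (mod q₀), and for α coprime to q₀ let ᾱ denote its inverse mod q₀. Then Σ_{α=1}^{q₀−1} K̂₀((r − αq₁) q̄₁; q₀) e(−ᾱ n / q₀) = Σ_{x=0}^{q₀−1} K₀(x) e(r q̄₁ x / q₀) Kl₂(nx; q₀). -/

import Mathlib

open scoped Real BigOperators

/-- `e x = exp(2πix)`. -/
noncomputable def e (x : ℝ) : ℂ := Complex.exp (2 * Real.pi * Complex.I * x)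

/-- Normalized Fourier transform of an `s`-periodic function `F : ℤ → ℂ`:
`F̂(n; s) = s^{−1/2} Σ_{x=0}^{s−1} F(x) e(nx/s)`. -/
noncomputable def Fhat (s : ℕ) (F : ℤ → ℂ) (n : ℤ) : ℂ :=
  (Real.sqrt s : ℂ)⁻¹ * ∑ x ∈ Finset.range s, F x * e ((n : ℝ) * (x : ℝ) / (s : ℝ))

/-- The normalized Kloosterman sum `Kl₂(m; p) = p^{−1/2} Σ_{t=1}^{p−1} e((t + m t̄)/p)`,
where `t̄` is the inverse of `t` mod `p`. -/
noncomputable def Kl2 (p : ℕ) (m : ℤ) : ℂ :=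
  (Real.sqrt p : ℂ)⁻¹ *
    ∑ t ∈ Finset.Icc 1 (p - 1),
      e ((((t : ℤ) + m * ((((t : ℕ) : ZMod p)⁻¹).val : ℤ) : ℤ) : ℝ) / (p : ℝ))

lemma e_add (x y : ℝ) : e (x + y) = e x * e y := by
  simp only [e, Complex.ofReal_add, mul_add, Complex.exp_add]

lemma e_int (k : ℤ) : e k = 1 := by
  simp only [e]
  have h := Complex.exp_int_mul_two_pi_mul_I k
  rw [← h]; push_cast; ring_nf

lemma e_congr {q : ℕ} (hq : q ≠ 0) {a b : ℤ} (h : (a : ZMod q) = b) :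
    e ((a : ℝ) / q) = e ((b : ℝ) / q) := by
  have hd : (q : ℤ) ∣ a - b := by
    have : ((a - b : ℤ) : ZMod q) = 0 := by push_cast [h]; ring
    exact (ZMod.intCast_zmod_eq_zero_iff_dvd _ _).mp this
  obtain ⟨k, hk⟩ := hd
  have hq' : (q : ℝ) ≠ 0 := Nat.cast_ne_zero.mpr hq
  have harg : (a : ℝ) / q = (b : ℝ) / q + (k : ℤ) := by
    have : (a : ℝ) = b + q * k := by exact_mod_cast congrArg (Int.cast : ℤ → ℝ) (by linarith)
    rw [this]; field_simp
  rw [harg, e_add, e_int, mul_one]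

lemma kc_inner_sum (q₀ : ℕ) (hq₀ : q₀.Prime) (q₁ r n qb₁ : ℤ)
    (hn : ¬ (q₀ : ℤ) ∣ n) (hqb₁ : qb₁ * q₁ ≡ 1 [ZMOD (q₀ : ℤ)]) (x : ℕ) :
    ∑ α ∈ Finset.Icc 1 (q₀ - 1),
        e ((((r - (α : ℤ) * q₁) * qb₁ * (x : ℤ) - ((((α : ℕ) : ZMod q₀)⁻¹).val : ℤ) * n : ℤ) : ℝ) / q₀) =
    ∑ t ∈ Finset.Icc 1 (q₀ - 1),
        e (((r * qb₁ * (x : ℤ) + (t : ℤ) + n * (x : ℤ) * ((((t : ℕ) : ZMod q₀)⁻¹).val : ℤ) : ℤ) : ℝ) / q₀) := by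
  haveI : Fact q₀.Prime := ⟨hq₀⟩
  have hq0 : q₀ ≠ 0 := hq₀.pos.ne'
  have hn' : (n : ZMod q₀) ≠ 0 := fun h => hn ((ZMod.intCast_zmod_eq_zero_iff_dvd _ _).mp h)
  have hq1 : (qb₁ : ZMod q₀) * (q₁ : ZMod q₀) = 1 := by
    have := (ZMod.intCast_eq_intCast_iff _ _ _).mpr hqb₁
    push_cast at this; exact this
  have hmem : ∀ α ∈ Finset.Icc 1 (q₀ - 1), ((α : ℕ) : ZMod q₀) ≠ 0 := by
    intro α hα
    rw [Finset.mem_Icc] at hα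
    intro h
    have hd : q₀ ∣ α := (ZMod.natCast_eq_zero_iff _ _).mp h
    have := Nat.le_of_dvd (by omega) hd
    omega
  set g : ℕ → ℕ := fun α => (-(((α : ℕ) : ZMod q₀)⁻¹) * (n : ZMod q₀)).val with hg
  have hgne : ∀ α ∈ Finset.Icc 1 (q₀ - 1),
      (-(((α : ℕ) : ZMod q₀)⁻¹) * (n : ZMod q₀)) ≠ 0 := by
    intro α hα
    exact mul_ne_zero (neg_ne_zero.mpr (inv_ne_zero (hmem α hα))) hn'
  have hgmem : ∀ α ∈ Finset.Icc 1 (q₀ - 1), g α ∈ Finset.Icc 1 (q₀ - 1) := by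
    intro α hα
    rw [Finset.mem_Icc]
    show 1 ≤ (-(((α : ℕ) : ZMod q₀)⁻¹) * (n : ZMod q₀)).val ∧
        (-(((α : ℕ) : ZMod q₀)⁻¹) * (n : ZMod q₀)).val ≤ q₀ - 1
    have h1 : (-(((α : ℕ) : ZMod q₀)⁻¹) * (n : ZMod q₀)).val ≠ 0 :=
      fun h => hgne α hα ((ZMod.val_eq_zero _).mp h)
    have h2 := ZMod.val_lt (-(((α : ℕ) : ZMod q₀)⁻¹) * (n : ZMod q₀))
    constructor <;> omega
  have hcast : ∀ α : ℕ, ((g α : ℕ) : ZMod q₀) = -(((α : ℕ) : ZMod q₀)⁻¹) * (n : ZMod q₀) := by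
    intro α
    simp [hg, ZMod.natCast_val, ZMod.cast_id]
  have hinv : ∀ α ∈ Finset.Icc 1 (q₀ - 1), g (g α) = α := by
    intro α hα
    have hα' : α < q₀ := by
      rw [Finset.mem_Icc] at hα; omega
    have ha := hmem α hα
    have : (-(((g α : ℕ) : ZMod q₀)⁻¹) * (n : ZMod q₀)) = ((α : ℕ) : ZMod q₀) := by
      rw [hcast α]
      field_simp
    show (-(((g α : ℕ) : ZMod q₀)⁻¹) * (n : ZMod q₀)).val = α
    rw [this, ZMod.val_cast_of_lt hα']
  refine Finset.sum_nbij' g g hgmem hgmem hinv hinv ?_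
  intro α hα
  have ha := hmem α hα
  apply e_congr hq0
  push_cast [ZMod.natCast_val, ZMod.cast_id, hcast α]
  set a : ZMod q₀ := ((α : ℕ) : ZMod q₀)
  rw [show (-a⁻¹ * (n : ZMod q₀))⁻¹ = -a * (n : ZMod q₀)⁻¹ by rw [mul_inv, inv_neg, inv_inv]]
  have hne := mul_inv_cancel₀ hn'
  linear_combination (a * (x : ZMod q₀)) * hne - (a * (x : ZMod q₀)) * hq1

/-- Kloosterman completion identity: for `q₀` prime, `q₁` coprime to `q₀`, `K₀`
`q₀`-periodic, `r` an integer and `n` an integer with `q₀ ∤ n`,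
`Σ_{α=1}^{q₀−1} K̂₀((r − αq₁) q̄₁; q₀) e(−ᾱ n / q₀)
  = Σ_{x=0}^{q₀−1} K₀(x) e(r q̄₁ x / q₀) Kl₂(nx; q₀)`. -/
theorem kloosterman_completion (q₀ : ℕ) (hq₀ : q₀.Prime) (q₁ : ℤ)
    (hcop : IsCoprime (q₁ : ℤ) (q₀ : ℤ)) (K₀ : ℤ → ℂ)
    (hK₀ : ∀ x : ℤ, K₀ (x + (q₀ : ℤ)) = K₀ x) (r n : ℤ) (hn : ¬ (q₀ : ℤ) ∣ n)
    (qb₁ : ℤ) (hqb₁ : qb₁ * q₁ ≡ 1 [ZMOD (q₀ : ℤ)]) :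
    ∑ α ∈ Finset.Icc 1 (q₀ - 1),
        Fhat q₀ K₀ ((r - (α : ℤ) * q₁) * qb₁) *
          e (-(((((α : ℕ) : ZMod q₀)⁻¹).val : ℝ) * (n : ℝ) / (q₀ : ℝ))) =
      ∑ x ∈ Finset.range q₀,
        K₀ x * e (((r * qb₁ : ℤ) : ℝ) * (x : ℝ) / (q₀ : ℝ)) * Kl2 q₀ (n * (x : ℤ)) := by
  set c : ℂ := (Real.sqrt q₀ : ℂ)⁻¹ with hc
  have hterm : ∀ α x : ℕ,
      e ((((r - (α : ℤ) * q₁) * qb₁ : ℤ) : ℝ) * (x : ℝ) / q₀) *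
        e (-(((((α : ℕ) : ZMod q₀)⁻¹).val : ℝ) * (n : ℝ) / q₀)) =
      e ((((r - (α : ℤ) * q₁) * qb₁ * (x : ℤ) -
          ((((α : ℕ) : ZMod q₀)⁻¹).val : ℤ) * n : ℤ) : ℝ) / q₀) := by
    intro α x
    rw [← e_add]
    congr 1
    push_cast
    ring
  have hterm' : ∀ t x : ℕ,
      e (((r * qb₁ : ℤ) : ℝ) * (x : ℝ) / q₀) *
        e ((((t : ℤ) + n * (x : ℤ) * ((((t : ℕ) : ZMod q₀)⁻¹).val : ℤ) : ℤ) : ℝ) / q₀) =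
      e (((r * qb₁ * (x : ℤ) + (t : ℤ) +
          n * (x : ℤ) * ((((t : ℕ) : ZMod q₀)⁻¹).val : ℤ) : ℤ) : ℝ) / q₀) := by
    intro t x
    rw [← e_add]
    congr 1
    push_cast
    ring
  have hL : ∑ α ∈ Finset.Icc 1 (q₀ - 1),
        Fhat q₀ K₀ ((r - (α : ℤ) * q₁) * qb₁) *
          e (-(((((α : ℕ) : ZMod q₀)⁻¹).val : ℝ) * (n : ℝ) / (q₀ : ℝ))) =
      ∑ x ∈ Finset.range q₀, ∑ α ∈ Finset.Icc 1 (q₀ - 1),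
        c * (K₀ x * e ((((r - (α : ℤ) * q₁) * qb₁ * (x : ℤ) -
            ((((α : ℕ) : ZMod q₀)⁻¹).val : ℤ) * n : ℤ) : ℝ) / q₀)) := by
    rw [Finset.sum_comm]
    refine Finset.sum_congr rfl fun α hα => ?_
    simp only [Fhat, ← hc]
    rw [Finset.mul_sum, Finset.sum_mul]
    refine Finset.sum_congr rfl fun x hx => ?_
    rw [mul_assoc, mul_assoc, hterm α x]
  have hR : ∑ x ∈ Finset.range q₀,
        K₀ x * e (((r * qb₁ : ℤ) : ℝ) * (x : ℝ) / (q₀ : ℝ)) * Kl2 q₀ (n * (x : ℤ)) =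
      ∑ x ∈ Finset.range q₀, ∑ t ∈ Finset.Icc 1 (q₀ - 1),
        c * (K₀ x * e (((r * qb₁ * (x : ℤ) + (t : ℤ) +
            n * (x : ℤ) * ((((t : ℕ) : ZMod q₀)⁻¹).val : ℤ) : ℤ) : ℝ) / q₀)) := by
    refine Finset.sum_congr rfl fun x hx => ?_
    simp only [Kl2, ← hc]
    rw [Finset.mul_sum, Finset.mul_sum]
    refine Finset.sum_congr rfl fun t ht => ?_
    rw [show K₀ x * e (((r * qb₁ : ℤ) : ℝ) * (x : ℝ) / (q₀ : ℝ)) *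
        (c * e ((((t : ℤ) + n * (x : ℤ) * ((((t : ℕ) : ZMod q₀)⁻¹).val : ℤ) : ℤ) : ℝ) / q₀)) =
        c * (K₀ x * (e (((r * qb₁ : ℤ) : ℝ) * (x : ℝ) / (q₀ : ℝ)) *
          e ((((t : ℤ) + n * (x : ℤ) * ((((t : ℕ) : ZMod q₀)⁻¹).val : ℤ) : ℤ) : ℝ) / q₀)))
      from by ring, hterm' t x]
  rw [hL, hR]
  refine Finset.sum_congr rfl fun x hx => ?_
  simp only [← Finset.mul_sum]
  rw [kc_inner_sum q₀ hq₀ q₁ r n qb₁ hn hqb₁ x]
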